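/- Cross-difference identification of the local average controlled spillover effect on a rectangle (Theorem 3.1, item 3, spillover, d = 1): let 0 ≤ p₀ < p₀' ≤ 1 and 0 ≤ p₁ < p₁' ≤ 1 with ℙ(p₀ < V₀ ≤ p₀' and p₁ < V₁ ≤ p₁') > 0. Then [C(p₀',p₁') − C(p₀',p₁)] − [C(p₀,p₁') − C(p₀,p₁)] = ℙ(p₀ < V₀ ≤ p₀' and p₁ < V₁ ≤ p₁'), and ([F¹(p₀',p₁') − F¹(p₀',p₁)] − [F¹(p₀,p₁') − F¹(p₀,p₁)]) / ([C(p₀',p₁') − C(p₀',p₁)] − [C(p₀,p₁') − C(p₀,p₁)]) = 𝔼[ m(1,1,U) − m(1,0,U) | p₀ < V₀ ≤ p₀' and p₁ < V₁ ≤ p₁' ]. -/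

import Mathlib

open MeasureTheory ProbabilityTheory

private lemma ind_and' {P Q : Prop} [Decidable P] [Decidable Q] :
    (if P ∧ Q then (1:ℝ) else 0) = (if P then (1:ℝ) else 0) * (if Q then (1:ℝ) else 0) := by
  by_cases hP : P <;> by_cases hQ : Q <;> simp [hP, hQ]

private lemma ind_Ioc' (x p p' : ℝ) (h : p ≤ p') :
    (if p < x ∧ x ≤ p' then (1:ℝ) else 0)
      = (if x ≤ p' then (1:ℝ) else 0) - (if x ≤ p then (1:ℝ) else 0) := by
  by_cases h1 : x ≤ p
  · simp [h1, h1.trans h, not_lt.mpr h1]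
  · by_cases h2 : x ≤ p'
    · simp [h1, h2, not_le.mp h1]
    · simp [h1, h2]

private lemma ind_gt' (y q : ℝ) :
    (if q < y then (1:ℝ) else 0) = 1 - (if y ≤ q then (1:ℝ) else 0) := by
  by_cases h : y ≤ q
  · simp [h, not_lt.mpr h]
  · simp [h, not_le.mp h]

private lemma ind_rect (x y p₀ p₀' p₁ p₁' : ℝ) (h0 : p₀ ≤ p₀') (h1 : p₁ ≤ p₁') :
    (if p₀ < x ∧ x ≤ p₀' ∧ p₁ < y ∧ y ≤ p₁' then (1:ℝ) else 0)
      = ((if x ≤ p₀' then (1:ℝ) else 0) - (if x ≤ p₀ then (1:ℝ) else 0))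
        * ((if y ≤ p₁' then (1:ℝ) else 0) - (if y ≤ p₁ then (1:ℝ) else 0)) := by
  have hiff : (p₀ < x ∧ x ≤ p₀' ∧ p₁ < y ∧ y ≤ p₁')
      ↔ ((p₀ < x ∧ x ≤ p₀') ∧ (p₁ < y ∧ y ≤ p₁')) := by tauto
  rw [if_congr hiff rfl rfl, ind_and', ind_Ioc' x p₀ p₀' h0, ind_Ioc' y p₁ p₁' h1]

/-- Cross-difference identification of the local average controlled spillover effect on a
rectangle (Theorem 3.1, item 3, spillover, d = 1). -/
theorem lacse_rectangle_identification
    {Ω 𝒰 : Type*} [MeasurableSpace Ω] [MeasurableSpace 𝒰]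
    (μ : Measure Ω) [IsProbabilityMeasure μ]
    (U : Ω → 𝒰) (V₀ V₁ : Ω → ℝ)
    (hU : Measurable U) (hV₀ : Measurable V₀) (hV₁ : Measurable V₁)
    -- V₀, V₁ uniformly distributed on (0,1)
    (hV₀unif : Measure.map V₀ μ = volume.restrict (Set.Ioo (0:ℝ) 1))
    (hV₁unif : Measure.map V₁ μ = volume.restrict (Set.Ioo (0:ℝ) 1))
    -- bounded measurable outcome function (`true` codes treatment 1, `false` codes 0)
    (m : Bool → Bool → 𝒰 → ℝ) (hm : ∀ d d', Measurable (m d d'))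
    (hm_bdd : ∃ B, ∀ d d' u, |m d d' u| ≤ B)
    -- the copula of (V₀, V₁)
    (C : ℝ → ℝ → ℝ)
    (hC : ∀ p q, C p q = (μ {ω | V₀ ω ≤ p ∧ V₁ ω ≤ q}).toReal)
    -- identified conditional-mean function F¹
    (F1 : ℝ → ℝ → ℝ)
    (hF1 : ∀ p q, F1 p q =
      (∫ ω, m true true (U ω) * (if V₀ ω ≤ p then (1:ℝ) else 0)
        * (if V₁ ω ≤ q then (1:ℝ) else 0) ∂μ)
      + ∫ ω, m true false (U ω) * (if V₀ ω ≤ p then (1:ℝ) else 0)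
        * (if q < V₁ ω then (1:ℝ) else 0) ∂μ)
    -- the propensity-score values
    (p₀ p₀' p₁ p₁' : ℝ) (hp₀0 : 0 ≤ p₀) (hp₀lt : p₀ < p₀') (hp₀'1 : p₀' ≤ 1)
    (hp₁0 : 0 ≤ p₁) (hp₁lt : p₁ < p₁') (hp₁'1 : p₁' ≤ 1)
    -- the conditioning subpopulation {p₀ < V₀ ≤ p₀', p₁ < V₁ ≤ p₁'} has positive probability
    (E : Set Ω)
    (hE : E = {ω | p₀ < V₀ ω ∧ V₀ ω ≤ p₀' ∧ p₁ < V₁ ω ∧ V₁ ω ≤ p₁'})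
    (hEpos : 0 < μ E) :
    (C p₀' p₁' - C p₀' p₁) - (C p₀ p₁' - C p₀ p₁) = (μ E).toReal ∧
    ((F1 p₀' p₁' - F1 p₀' p₁) - (F1 p₀ p₁' - F1 p₀ p₁))
      / ((C p₀' p₁' - C p₀' p₁) - (C p₀ p₁' - C p₀ p₁))
      = (∫ ω in E, (m true true (U ω) - m true false (U ω)) ∂μ) / (μ E).toReal := by
  subst hE
  obtain ⟨B, hB⟩ := hm_bdd
  -- measurability of the indicator functions
  have hI : ∀ p : ℝ, Measurable (fun ω => if V₀ ω ≤ p then (1:ℝ) else 0) := fun p =>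
    Measurable.ite (hV₀ measurableSet_Iic) measurable_const measurable_const
  have hJ : ∀ q : ℝ, Measurable (fun ω => if V₁ ω ≤ q then (1:ℝ) else 0) := fun q =>
    Measurable.ite (hV₁ measurableSet_Iic) measurable_const measurable_const
  have hK : ∀ q : ℝ, Measurable (fun ω => if q < V₁ ω then (1:ℝ) else 0) := fun q =>
    Measurable.ite (hV₁ measurableSet_Ioi) measurable_const measurable_const
  have hEmeas : MeasurableSet {ω | p₀ < V₀ ω ∧ V₀ ω ≤ p₀' ∧ p₁ < V₁ ω ∧ V₁ ω ≤ p₁'} := by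
    have : {ω | p₀ < V₀ ω ∧ V₀ ω ≤ p₀' ∧ p₁ < V₁ ω ∧ V₁ ω ≤ p₁'}
        = V₀ ⁻¹' Set.Ioc p₀ p₀' ∩ V₁ ⁻¹' Set.Ioc p₁ p₁' := by
      ext ω; simp only [Set.mem_setOf_eq, Set.mem_inter_iff, Set.mem_preimage, Set.mem_Ioc]
      tauto
    rw [this]; exact (hV₀ measurableSet_Ioc).inter (hV₁ measurableSet_Ioc)
  -- integrability
  have intII : ∀ p q : ℝ, Integrable (fun ω =>
      (if V₀ ω ≤ p then (1:ℝ) else 0) * (if V₁ ω ≤ q then (1:ℝ) else 0)) μ := by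
    intro p q
    refine (integrable_const (1:ℝ)).mono' ((hI p).mul (hJ q)).aestronglyMeasurable
      (ae_of_all _ fun ω => ?_)
    by_cases h0 : V₀ ω ≤ p <;> by_cases h1 : V₁ ω ≤ q <;> simp [h0, h1]
  have intG : ∀ (d' : Bool) (p : ℝ) (j : Ω → ℝ), Measurable j → (∀ ω, j ω = 0 ∨ j ω = 1) →
      Integrable (fun ω => m true d' (U ω) * (if V₀ ω ≤ p then (1:ℝ) else 0) * j ω) μ := by
    intro d' p j hj hj01
    refine (integrable_const B).mono'
      ((((hm true d').comp hU).mul (hI p)).mul hj).aestronglyMeasurable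
      (ae_of_all _ fun ω => ?_)
    have h := hB true d' (U ω)
    have hBpos : (0:ℝ) ≤ B := le_trans (abs_nonneg _) h
    rcases hj01 ω with hjj | hjj <;> by_cases h0 : V₀ ω ≤ p <;>
      simp [Real.norm_eq_abs, hjj, h0] <;> first | exact h | exact hBpos | linarith
  have intF : ∀ p q : ℝ, Integrable (fun ω =>
      m true true (U ω) * (if V₀ ω ≤ p then (1:ℝ) else 0)
        * (if V₁ ω ≤ q then (1:ℝ) else 0)) μ :=
    fun p q => intG true p _ (hJ q) (fun ω => by by_cases h : V₁ ω ≤ q <;> simp [h])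
  have intF' : ∀ p q : ℝ, Integrable (fun ω =>
      m true false (U ω) * (if V₀ ω ≤ p then (1:ℝ) else 0)
        * (if q < V₁ ω then (1:ℝ) else 0)) μ :=
    fun p q => intG false p _ (hK q) (fun ω => by by_cases h : q < V₁ ω <;> simp [h])
  -- C as an integral of indicators
  have hCeq : ∀ p q : ℝ, C p q
      = ∫ ω, (if V₀ ω ≤ p then (1:ℝ) else 0) * (if V₁ ω ≤ q then (1:ℝ) else 0) ∂μ := by
    intro p q
    have hs : MeasurableSet {ω | V₀ ω ≤ p ∧ V₁ ω ≤ q} :=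
      (hV₀ measurableSet_Iic).inter (hV₁ measurableSet_Iic)
    rw [hC, ← measureReal_def, ← integral_indicator_one hs]
    refine integral_congr_ae (ae_of_all _ fun ω => ?_)
    by_cases h0 : V₀ ω ≤ p <;> by_cases h1 : V₁ ω ≤ q <;>
      simp [Set.indicator_apply, h0, h1]
  -- μ E as an integral of indicators
  have hEint : (μ {ω | p₀ < V₀ ω ∧ V₀ ω ≤ p₀' ∧ p₁ < V₁ ω ∧ V₁ ω ≤ p₁'}).toReal
      = ∫ ω, (if p₀ < V₀ ω ∧ V₀ ω ≤ p₀' ∧ p₁ < V₁ ω ∧ V₁ ω ≤ p₁'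
          then (1:ℝ) else 0) ∂μ := by
    rw [← measureReal_def, ← integral_indicator_one hEmeas]
    refine integral_congr_ae (ae_of_all _ fun ω => ?_)
    by_cases hω : p₀ < V₀ ω ∧ V₀ ω ≤ p₀' ∧ p₁ < V₁ ω ∧ V₁ ω ≤ p₁' <;>
      simp [Set.indicator_apply, hω]
  -- part 1
  have part1 : (C p₀' p₁' - C p₀' p₁) - (C p₀ p₁' - C p₀ p₁)
      = (μ {ω | p₀ < V₀ ω ∧ V₀ ω ≤ p₀' ∧ p₁ < V₁ ω ∧ V₁ ω ≤ p₁'}).toReal := by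
    have hCsub : ∀ p : ℝ,
        (∫ ω, (if V₀ ω ≤ p then (1:ℝ) else 0) * (if V₁ ω ≤ p₁' then (1:ℝ) else 0) ∂μ)
          - (∫ ω, (if V₀ ω ≤ p then (1:ℝ) else 0) * (if V₁ ω ≤ p₁ then (1:ℝ) else 0) ∂μ)
        = ∫ ω, ((if V₀ ω ≤ p then (1:ℝ) else 0) * (if V₁ ω ≤ p₁' then (1:ℝ) else 0)
            - (if V₀ ω ≤ p then (1:ℝ) else 0) * (if V₁ ω ≤ p₁ then (1:ℝ) else 0)) ∂μ :=
      fun p => (integral_sub (intII p p₁') (intII p p₁)).symm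
    have hCsub2 :
        (∫ ω, ((if V₀ ω ≤ p₀' then (1:ℝ) else 0) * (if V₁ ω ≤ p₁' then (1:ℝ) else 0)
            - (if V₀ ω ≤ p₀' then (1:ℝ) else 0) * (if V₁ ω ≤ p₁ then (1:ℝ) else 0)) ∂μ)
          - (∫ ω, ((if V₀ ω ≤ p₀ then (1:ℝ) else 0) * (if V₁ ω ≤ p₁' then (1:ℝ) else 0)
            - (if V₀ ω ≤ p₀ then (1:ℝ) else 0) * (if V₁ ω ≤ p₁ then (1:ℝ) else 0)) ∂μ)
        = ∫ ω, (((if V₀ ω ≤ p₀' then (1:ℝ) else 0) * (if V₁ ω ≤ p₁' then (1:ℝ) else 0)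
            - (if V₀ ω ≤ p₀' then (1:ℝ) else 0) * (if V₁ ω ≤ p₁ then (1:ℝ) else 0))
          - ((if V₀ ω ≤ p₀ then (1:ℝ) else 0) * (if V₁ ω ≤ p₁' then (1:ℝ) else 0)
            - (if V₀ ω ≤ p₀ then (1:ℝ) else 0) * (if V₁ ω ≤ p₁ then (1:ℝ) else 0))) ∂μ :=
      (integral_sub ((intII p₀' p₁').sub (intII p₀' p₁))
        ((intII p₀ p₁').sub (intII p₀ p₁))).symm
    rw [hCeq p₀' p₁', hCeq p₀' p₁, hCeq p₀ p₁', hCeq p₀ p₁, hEint, hCsub p₀', hCsub p₀, hCsub2]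
    refine integral_congr_ae (ae_of_all _ fun ω => ?_)
    simp only [ind_rect (V₀ ω) (V₁ ω) p₀ p₀' p₁ p₁' hp₀lt.le hp₁lt.le]
    ring
  -- part 2 numerator
  have part2 : (F1 p₀' p₁' - F1 p₀' p₁) - (F1 p₀ p₁' - F1 p₀ p₁)
      = ∫ ω in {ω | p₀ < V₀ ω ∧ V₀ ω ≤ p₀' ∧ p₁ < V₁ ω ∧ V₁ ω ≤ p₁'},
          (m true true (U ω) - m true false (U ω)) ∂μ := by
    have intS : ∀ p q : ℝ, Integrable (fun ω =>
        m true true (U ω) * (if V₀ ω ≤ p then (1:ℝ) else 0) * (if V₁ ω ≤ q then (1:ℝ) else 0)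
        + m true false (U ω) * (if V₀ ω ≤ p then (1:ℝ) else 0)
          * (if q < V₁ ω then (1:ℝ) else 0)) μ :=
      fun p q => (intF p q).add (intF' p q)
    have hsum : ∀ p q : ℝ,
        (∫ ω, m true true (U ω) * (if V₀ ω ≤ p then (1:ℝ) else 0)
            * (if V₁ ω ≤ q then (1:ℝ) else 0) ∂μ)
        + (∫ ω, m true false (U ω) * (if V₀ ω ≤ p then (1:ℝ) else 0)
            * (if q < V₁ ω then (1:ℝ) else 0) ∂μ)
        = ∫ ω, (m true true (U ω) * (if V₀ ω ≤ p then (1:ℝ) else 0)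
              * (if V₁ ω ≤ q then (1:ℝ) else 0)
            + m true false (U ω) * (if V₀ ω ≤ p then (1:ℝ) else 0)
              * (if q < V₁ ω then (1:ℝ) else 0)) ∂μ :=
      fun p q => (integral_add (intF p q) (intF' p q)).symm
    have hFsub : ∀ p : ℝ,
        (∫ ω, (m true true (U ω) * (if V₀ ω ≤ p then (1:ℝ) else 0)
              * (if V₁ ω ≤ p₁' then (1:ℝ) else 0)
            + m true false (U ω) * (if V₀ ω ≤ p then (1:ℝ) else 0)
              * (if p₁' < V₁ ω then (1:ℝ) else 0)) ∂μ)
        - (∫ ω, (m true true (U ω) * (if V₀ ω ≤ p then (1:ℝ) else 0)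
              * (if V₁ ω ≤ p₁ then (1:ℝ) else 0)
            + m true false (U ω) * (if V₀ ω ≤ p then (1:ℝ) else 0)
              * (if p₁ < V₁ ω then (1:ℝ) else 0)) ∂μ)
        = ∫ ω, ((m true true (U ω) * (if V₀ ω ≤ p then (1:ℝ) else 0)
              * (if V₁ ω ≤ p₁' then (1:ℝ) else 0)
            + m true false (U ω) * (if V₀ ω ≤ p then (1:ℝ) else 0)
              * (if p₁' < V₁ ω then (1:ℝ) else 0))
          - (m true true (U ω) * (if V₀ ω ≤ p then (1:ℝ) else 0)
              * (if V₁ ω ≤ p₁ then (1:ℝ) else 0)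
            + m true false (U ω) * (if V₀ ω ≤ p then (1:ℝ) else 0)
              * (if p₁ < V₁ ω then (1:ℝ) else 0))) ∂μ :=
      fun p => (integral_sub (intS p p₁') (intS p p₁)).symm
    have hFsub2 :
        (∫ ω, ((m true true (U ω) * (if V₀ ω ≤ p₀' then (1:ℝ) else 0)
              * (if V₁ ω ≤ p₁' then (1:ℝ) else 0)
            + m true false (U ω) * (if V₀ ω ≤ p₀' then (1:ℝ) else 0)
              * (if p₁' < V₁ ω then (1:ℝ) else 0))
          - (m true true (U ω) * (if V₀ ω ≤ p₀' then (1:ℝ) else 0)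
              * (if V₁ ω ≤ p₁ then (1:ℝ) else 0)
            + m true false (U ω) * (if V₀ ω ≤ p₀' then (1:ℝ) else 0)
              * (if p₁ < V₁ ω then (1:ℝ) else 0))) ∂μ)
        - (∫ ω, ((m true true (U ω) * (if V₀ ω ≤ p₀ then (1:ℝ) else 0)
              * (if V₁ ω ≤ p₁' then (1:ℝ) else 0)
            + m true false (U ω) * (if V₀ ω ≤ p₀ then (1:ℝ) else 0)
              * (if p₁' < V₁ ω then (1:ℝ) else 0))
          - (m true true (U ω) * (if V₀ ω ≤ p₀ then (1:ℝ) else 0)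
              * (if V₁ ω ≤ p₁ then (1:ℝ) else 0)
            + m true false (U ω) * (if V₀ ω ≤ p₀ then (1:ℝ) else 0)
              * (if p₁ < V₁ ω then (1:ℝ) else 0))) ∂μ)
        = ∫ ω, (((m true true (U ω) * (if V₀ ω ≤ p₀' then (1:ℝ) else 0)
              * (if V₁ ω ≤ p₁' then (1:ℝ) else 0)
            + m true false (U ω) * (if V₀ ω ≤ p₀' then (1:ℝ) else 0)
              * (if p₁' < V₁ ω then (1:ℝ) else 0))
          - (m true true (U ω) * (if V₀ ω ≤ p₀' then (1:ℝ) else 0)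
              * (if V₁ ω ≤ p₁ then (1:ℝ) else 0)
            + m true false (U ω) * (if V₀ ω ≤ p₀' then (1:ℝ) else 0)
              * (if p₁ < V₁ ω then (1:ℝ) else 0)))
          - ((m true true (U ω) * (if V₀ ω ≤ p₀ then (1:ℝ) else 0)
              * (if V₁ ω ≤ p₁' then (1:ℝ) else 0)
            + m true false (U ω) * (if V₀ ω ≤ p₀ then (1:ℝ) else 0)
              * (if p₁' < V₁ ω then (1:ℝ) else 0))
          - (m true true (U ω) * (if V₀ ω ≤ p₀ then (1:ℝ) else 0)
              * (if V₁ ω ≤ p₁ then (1:ℝ) else 0)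
            + m true false (U ω) * (if V₀ ω ≤ p₀ then (1:ℝ) else 0)
              * (if p₁ < V₁ ω then (1:ℝ) else 0)))) ∂μ :=
      (integral_sub ((intS p₀' p₁').sub (intS p₀' p₁)) ((intS p₀ p₁').sub (intS p₀ p₁))).symm
    rw [← integral_indicator hEmeas,
      hF1 p₀' p₁', hF1 p₀' p₁, hF1 p₀ p₁', hF1 p₀ p₁,
      hsum p₀' p₁', hsum p₀' p₁, hsum p₀ p₁', hsum p₀ p₁, hFsub p₀', hFsub p₀, hFsub2]
    refine integral_congr_ae (ae_of_all _ fun ω => ?_)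
    have hind : Set.indicator {ω | p₀ < V₀ ω ∧ V₀ ω ≤ p₀' ∧ p₁ < V₁ ω ∧ V₁ ω ≤ p₁'}
        (fun ω => m true true (U ω) - m true false (U ω)) ω
        = (m true true (U ω) - m true false (U ω))
          * (if p₀ < V₀ ω ∧ V₀ ω ≤ p₀' ∧ p₁ < V₁ ω ∧ V₁ ω ≤ p₁' then (1:ℝ) else 0) := by
      by_cases hω : p₀ < V₀ ω ∧ V₀ ω ≤ p₀' ∧ p₁ < V₁ ω ∧ V₁ ω ≤ p₁' <;>
        simp [Set.indicator_apply, hω]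
    simp only [hind, ind_rect (V₀ ω) (V₁ ω) p₀ p₀' p₁ p₁' hp₀lt.le hp₁lt.le,
      ind_gt' (V₁ ω) p₁', ind_gt' (V₁ ω) p₁]
    ring
  exact ⟨part1, by rw [part1, part2]⟩
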